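/- arXiv:0809.3869 — 5 statements merged into one kernel-verified Lean document; each statement's English description precedes it below -/
import Mathlib

section
/- Let γ > 0 and ρ < 0 with γ + ρ ≠ 0. Suppose U satisfies the second-order condition: lim_{t→∞} [((U(tx) − U(t))/a(t) − (x^γ − 1)/γ)/A(t)] = (x^{γ+ρ} − 1)/(γ+ρ) for all x > 0. Then for every x > 1, lim_{t→∞} [ (ln((U(tx) − U(t))/a(t)) − ln((x^γ − 1)/γ)) / A(t) ] = (γ/(γ+ρ)) · (x^{γ+ρ} − 1)/(x^γ − 1). -/
open Filter Real Topology

/-- Lemma 4.1, limit form, case γ+ρ ≠ 0.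
If `U` satisfies the second-order regular variation condition (1.4) with `γ > 0`, `ρ < 0`,
`γ + ρ ≠ 0`, then for every `x > 1` the log-version limit holds. -/
theorem secondOrder_log_limit (U a A : ℝ → ℝ) (γ ρ : ℝ)
    (hγ : 0 < γ) (hρ : ρ < 0) (hγρ : γ + ρ ≠ 0)
    (ha : ∀ t, 0 < a t)
    (hA0 : Tendsto A atTop (𝓝 0))
    (hAne : ∀ᶠ t in atTop, A t ≠ 0)
    (hArv : ∀ x > (0:ℝ), Tendsto (fun t => |A (t * x)| / |A t|) atTop (𝓝 (x ^ ρ)))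
    (h2 : ∀ x > (0:ℝ),
      Tendsto (fun t => ((U (t * x) - U t) / a t - (x ^ γ - 1) / γ) / A t)
        atTop (𝓝 ((x ^ (γ + ρ) - 1) / (γ + ρ)))) :
    ∀ x > (1:ℝ),
      Tendsto
        (fun t => (Real.log ((U (t * x) - U t) / a t) - Real.log ((x ^ γ - 1) / γ)) / A t)
        atTop (𝓝 (γ / (γ + ρ) * ((x ^ (γ + ρ) - 1) / (x ^ γ - 1)))) := by
  intro x hx
  have hx0 : (0:ℝ) < x := lt_trans one_pos hx
  set c : ℝ := (x ^ γ - 1) / γ with hc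
  have hxγ : 1 < x ^ γ := (Real.one_lt_rpow_iff_of_pos hx0).mpr (Or.inl ⟨hx, hγ⟩)
  have hxγ1 : x ^ γ - 1 ≠ 0 := by linarith
  have hc0 : 0 < c := div_pos (by linarith) hγ
  set L : ℝ := (x ^ (γ + ρ) - 1) / (γ + ρ) with hL
  set g : ℝ → ℝ := fun t => (U (t * x) - U t) / a t with hg
  have hv : Tendsto (fun t => (g t - c) / A t) atTop (𝓝 L) := h2 x hx0
  -- g - c → 0
  have hgc : Tendsto (fun t => g t - c) atTop (𝓝 0) := by
    have h := hv.mul hA0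
    rw [mul_zero] at h
    refine h.congr' ?_
    filter_upwards [hAne] with t ht
    field_simp
  -- slope function
  set ψ : ℝ → ℝ := fun u => if u = 0 then 1 / c else (Real.log (c + u) - Real.log c) / u
    with hψdef
  have hψ : Tendsto ψ (𝓝 0) (𝓝 (1 / c)) := by
    have hd : HasDerivAt Real.log c⁻¹ c := Real.hasDerivAt_log (ne_of_gt hc0)
    have hslope : Tendsto (slope Real.log c) (𝓝[≠] c) (𝓝 c⁻¹) :=
      hasDerivAt_iff_tendsto_slope.mp hd
    have hmap : Tendsto (fun u : ℝ => c + u) (𝓝[≠] (0:ℝ)) (𝓝[≠] c) := by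
      apply tendsto_nhdsWithin_of_tendsto_nhds_of_eventually_within
      · have h0 : Tendsto (fun u : ℝ => c + u) (𝓝 0) (𝓝 (c + 0)) :=
          (continuous_const.add continuous_id).tendsto (0:ℝ)
        simpa using h0.mono_left nhdsWithin_le_nhds
      · filter_upwards [self_mem_nhdsWithin] with u hu
        simp only [Set.mem_compl_iff, Set.mem_singleton_iff] at hu ⊢
        intro h; exact hu (by linarith)
    have h1 : Tendsto ψ (𝓝[≠] (0:ℝ)) (𝓝 (1 / c)) := by
      have := hslope.comp hmap
      rw [one_div]
      refine this.congr' ?_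
      filter_upwards [self_mem_nhdsWithin] with u hu
      simp only [Set.mem_compl_iff, Set.mem_singleton_iff] at hu
      simp only [hψdef, Function.comp, slope, if_neg hu, add_sub_cancel_left, vsub_eq_sub]
      rw [div_eq_inv_mul, smul_eq_mul]
    rw [← nhdsNE_sup_pure (0:ℝ)]
    refine Tendsto.sup h1 ?_
    have hψ0 : ψ 0 = 1 / c := by simp [hψdef]
    rw [← hψ0]
    exact tendsto_pure_nhds ψ 0
  have key : ∀ t, (Real.log (g t) - Real.log c) / A t
      = ((g t - c) / A t) * ψ (g t - c) := by
    intro t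
    by_cases h : g t - c = 0
    · have hgt : g t = c := by linarith
      simp [hgt, h]
    · simp only [hψdef, if_neg h]
      have hcg : c + (g t - c) = g t := by ring
      rw [hcg]
      rcases eq_or_ne (A t) 0 with hA | hA
      · simp [hA]
      · field_simp
  have hprod : Tendsto (fun t => ((g t - c) / A t) * ψ (g t - c)) atTop
      (𝓝 (L * (1 / c))) := hv.mul (hψ.comp hgc)
  have heq : L * (1 / c) = γ / (γ + ρ) * ((x ^ (γ + ρ) - 1) / (x ^ γ - 1)) := by
    rw [hL, hc]
    field_simp
  rw [heq] at hprod
  refine hprod.congr ?_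
  intro t
  exact (key t).symm
end

section
/- Let γ > 0 and ρ < 0 with γ + ρ ≠ 0, and suppose U satisfies the second-order regular variation condition (1.4). Then for all x > 1 and y > 1, lim_{t→∞} [ ( ln((U(tx) − U(t))/(U(ty) − U(t))) − ln((x^γ − 1)/(y^γ − 1)) ) / A(t) ] = (γ/(γ+ρ)) [ (x^{γ+ρ} − 1)/(x^γ − 1) − (y^{γ+ρ} − 1)/(y^γ − 1) ]. -/
open Filter Real Topology

theorem log_one_add_sub_le (u : ℝ) (hu : |u| ≤ 1/2) : |Real.log (1 + u) - u| ≤ 2 * u ^ 2 := by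
  have h1 : |(-u)| < 1 := by rw [abs_neg]; linarith
  have := Real.abs_log_sub_add_sum_range_le h1 1
  simp [Finset.sum_range_one] at this
  have h3 : u ^ 2 / (1 - |u|) ≤ 2 * u ^ 2 := by
    rw [div_le_iff₀ (by linarith [abs_nonneg u])]
    nlinarith [abs_nonneg u, sq_nonneg u, sq_abs u]
  calc |Real.log (1 + u) - u| = |-u + Real.log (1 + u)| := by
        rw [abs_sub_comm, ← abs_neg]; ring_nf
    _ ≤ u ^ 2 / (1 - |u|) := this
    _ ≤ 2 * u ^ 2 := h3

theorem log_lin_aux (A B : ℝ → ℝ) (L c : ℝ) (hc : 0 < c)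
    (hA0 : Tendsto A atTop (𝓝 0)) (hAne : ∀ᶠ t in atTop, A t ≠ 0)
    (hB : Tendsto B atTop (𝓝 L)) :
    Tendsto (fun t => Real.log (1 + A t * B t / c) / A t) atTop (𝓝 (L / c)) := by
  set u : ℝ → ℝ := fun t => A t * B t / c with hu_def
  have hu : Tendsto u atTop (𝓝 0) := by
    have := (hA0.mul hB).div_const c
    simpa using this
  have h1 : Tendsto (fun t => u t / A t) atTop (𝓝 (L / c)) := by
    have h : Tendsto (fun t => B t / c) atTop (𝓝 (L / c)) := hB.div_const c
    refine h.congr' ?_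
    filter_upwards [hAne] with t hA
    field_simp [hu_def]
    simp only [hu_def]; field_simp
  have h2 : Tendsto (fun t => (Real.log (1 + u t) - u t) / A t) atTop (𝓝 0) := by
    have hg : Tendsto (fun t => 2 * |A t| * (B t / c) ^ 2) atTop
        (𝓝 (2 * |(0:ℝ)| * (L / c) ^ 2)) :=
      (hA0.abs.const_mul 2).mul ((hB.div_const c).pow 2)
    refine squeeze_zero_norm' ?_ (by simpa using hg)
    have hsmall : ∀ᶠ t in atTop, |u t| ≤ 1/2 := by
      have h5 := hu.abs
      simp only [abs_zero] at h5
      exact (h5.eventually_le_const (by norm_num : (0:ℝ) < 1/2))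
    filter_upwards [hsmall, hAne] with t h ht
    rw [Real.norm_eq_abs, abs_div, div_le_iff₀ (abs_pos.mpr ht)]
    calc |Real.log (1 + u t) - u t| ≤ 2 * (u t) ^ 2 := log_one_add_sub_le _ h
      _ = 2 * |A t| * (B t / c) ^ 2 * |A t| := by
          have hsq : |A t| * |A t| = A t ^ 2 := by rw [← abs_mul, ← sq, abs_sq]
          simp only [hu_def]
          rw [mul_div_assoc, mul_pow, ← hsq]; ring
  have h3 := h1.add h2
  rw [add_zero] at h3
  refine h3.congr fun t => ?_
  simp only [hu_def]
  ring


/-- Lemma 4.2, limit form, case γ+ρ ≠ 0. -/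
theorem secondOrder_logRatio_limit (U a A : ℝ → ℝ) (γ ρ : ℝ)
    (hγ : 0 < γ) (hρ : ρ < 0) (hγρ : γ + ρ ≠ 0)
    (ha : ∀ t, 0 < a t)
    (hA0 : Tendsto A atTop (𝓝 0))
    (hAne : ∀ᶠ t in atTop, A t ≠ 0)
    (hArv : ∀ x > (0:ℝ), Tendsto (fun t => |A (t * x)| / |A t|) atTop (𝓝 (x ^ ρ)))
    (h2 : ∀ x > (0:ℝ),
      Tendsto (fun t => ((U (t * x) - U t) / a t - (x ^ γ - 1) / γ) / A t)
        atTop (𝓝 ((x ^ (γ + ρ) - 1) / (γ + ρ)))) :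
    ∀ x > (1:ℝ), ∀ y > (1:ℝ),
      Tendsto
        (fun t => (Real.log ((U (t * x) - U t) / (U (t * y) - U t))
            - Real.log ((x ^ γ - 1) / (y ^ γ - 1))) / A t)
        atTop
        (𝓝 (γ / (γ + ρ) *
          ((x ^ (γ + ρ) - 1) / (x ^ γ - 1) - (y ^ (γ + ρ) - 1) / (y ^ γ - 1)))) := by
  intro x hx y hy
  have hx0 : (0:ℝ) < x := by linarith
  have hy0 : (0:ℝ) < y := by linarith
  have hxγ : 1 < x ^ γ := Real.one_lt_rpow_iff_of_pos hx0 |>.mpr (Or.inl ⟨hx, hγ⟩)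
  have hyγ : 1 < y ^ γ := Real.one_lt_rpow_iff_of_pos hy0 |>.mpr (Or.inl ⟨hy, hγ⟩)
  set cx : ℝ := (x ^ γ - 1) / γ with hcx_def
  set cy : ℝ := (y ^ γ - 1) / γ with hcy_def
  have hcx : 0 < cx := div_pos (by linarith) hγ
  have hcy : 0 < cy := div_pos (by linarith) hγ
  set Bx : ℝ → ℝ := fun t => ((U (t * x) - U t) / a t - cx) / A t with hBx_def
  set By : ℝ → ℝ := fun t => ((U (t * y) - U t) / a t - cy) / A t with hBy_def
  have hBx : Tendsto Bx atTop (𝓝 ((x ^ (γ + ρ) - 1) / (γ + ρ))) := h2 x hx0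
  have hBy : Tendsto By atTop (𝓝 ((y ^ (γ + ρ) - 1) / (γ + ρ))) := h2 y hy0
  -- eventual representation
  have hrepx : ∀ᶠ t in atTop, (U (t * x) - U t) / a t = cx + A t * Bx t := by
    filter_upwards [hAne] with t ht
    rw [hBx_def]
    field_simp
    ring
  have hrepy : ∀ᶠ t in atTop, (U (t * y) - U t) / a t = cy + A t * By t := by
    filter_upwards [hAne] with t ht
    rw [hBy_def]
    field_simp
    ring
  -- eventual positivity
  have htx : Tendsto (fun t => cx + A t * Bx t) atTop (𝓝 cx) := by
    have := (hA0.mul hBx).const_add cx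
    simpa using this
  have hty : Tendsto (fun t => cy + A t * By t) atTop (𝓝 cy) := by
    have := (hA0.mul hBy).const_add cy
    simpa using this
  have hposx : ∀ᶠ t in atTop, 0 < cx + A t * Bx t := htx.eventually_const_lt hcx
  have hposy : ∀ᶠ t in atTop, 0 < cy + A t * By t := hty.eventually_const_lt hcy
  -- the two log limits
  have hLx := log_lin_aux A Bx ((x ^ (γ + ρ) - 1) / (γ + ρ)) cx hcx hA0 hAne hBx
  have hLy := log_lin_aux A By ((y ^ (γ + ρ) - 1) / (γ + ρ)) cy hcy hA0 hAne hBy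
  have hsum := hLx.sub hLy
  have hx1 : x ^ γ - 1 ≠ 0 := ne_of_gt (by linarith)
  have hy1 : y ^ γ - 1 ≠ 0 := ne_of_gt (by linarith)
  have hγ' : γ ≠ 0 := ne_of_gt hγ
  have key : ∀ z w : ℝ, w ≠ 0 → z / (γ + ρ) / ((w) / γ) = γ / (γ + ρ) * (z / w) := by
    intro z w hw
    field_simp
  have heq : (x ^ (γ + ρ) - 1) / (γ + ρ) / cx - (y ^ (γ + ρ) - 1) / (γ + ρ) / cy
      = γ / (γ + ρ) * ((x ^ (γ + ρ) - 1) / (x ^ γ - 1) - (y ^ (γ + ρ) - 1) / (y ^ γ - 1)) := by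
    rw [hcx_def, hcy_def, key _ _ hx1, key _ _ hy1]
    ring
  rw [heq] at hsum
  refine hsum.congr' ?_
  filter_upwards [hrepx, hrepy, hposx, hposy] with t hrx hry hpx hpy
  have e1 : U (t * x) - U t = a t * (cx + A t * Bx t) := by
    have h := (div_eq_iff (ne_of_gt (ha t))).mp hrx
    rw [h]; ring
  have e2 : U (t * y) - U t = a t * (cy + A t * By t) := by
    have h := (div_eq_iff (ne_of_gt (ha t))).mp hry
    rw [h]; ring
  have hax : (U (t * x) - U t) / (U (t * y) - U t)
      = (cx + A t * Bx t) / (cy + A t * By t) := by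
    rw [e1, e2, mul_div_mul_left _ _ (ne_of_gt (ha t))]
  have hlogx : Real.log (1 + A t * Bx t / cx)
      = Real.log (cx + A t * Bx t) - Real.log cx := by
    rw [← Real.log_div (ne_of_gt hpx) (ne_of_gt hcx)]
    congr 1
    field_simp
  have hlogy : Real.log (1 + A t * By t / cy)
      = Real.log (cy + A t * By t) - Real.log cy := by
    rw [← Real.log_div (ne_of_gt hpy) (ne_of_gt hcy)]
    congr 1
    field_simp
  have hlogc : Real.log ((x ^ γ - 1) / (y ^ γ - 1)) = Real.log cx - Real.log cy := by
    rw [← Real.log_div (ne_of_gt hcx) (ne_of_gt hcy)]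
    congr 1
    rw [hcx_def, hcy_def]
    field_simp
  have hlogr : Real.log ((U (t * x) - U t) / (U (t * y) - U t))
      = Real.log (cx + A t * Bx t) - Real.log (cy + A t * By t) := by
    rw [hax, Real.log_div (ne_of_gt hpx) (ne_of_gt hpy)]

  simp only [hlogx, hlogy, hlogr, hlogc]
  ring
end

section
/- Let γ > 0 and ρ = −γ (so γ + ρ = 0), and suppose U satisfies the second-order regular variation condition (1.4) with Ψ_{γ,ρ}(x) = ln x. Then for all x > 1 and y > 1, lim_{t→∞} [ ( ln((U(tx) − U(t))/(U(ty) − U(t))) − ln((x^γ − 1)/(y^γ − 1)) ) / A(t) ] = γ ln x/(x^γ − 1) − γ ln y/(y^γ − 1). -/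
open Filter Real Topology

/-- The function `s ↦ log(1+s)/s` (extended by 1 at 0) tends to 1 at 0. -/
lemma aux_h_tendsto :
    Tendsto (fun s : ℝ => if s = 0 then 1 else Real.log (1 + s) / s) (𝓝 0) (𝓝 1) := by
  have hd : HasDerivAt Real.log 1 1 := by simpa using Real.hasDerivAt_log one_ne_zero
  have hslope := hasDerivAt_iff_tendsto_slope.mp hd
  have hmap : Tendsto (fun s : ℝ => 1 + s) (𝓝[≠] 0) (𝓝[≠] 1) := by
    rw [tendsto_nhdsWithin_iff]
    constructor
    · have : Tendsto (fun s : ℝ => 1 + s) (𝓝 0) (𝓝 (1 + 0)) :=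
        (continuous_const.add continuous_id).tendsto 0
      simpa using this.mono_left nhdsWithin_le_nhds
    · filter_upwards [self_mem_nhdsWithin] with s hs
      simp only [Set.mem_compl_iff, Set.mem_singleton_iff] at hs ⊢
      intro h; apply hs; linarith
  have hcomp : Tendsto (fun s : ℝ => Real.log (1 + s) / s) (𝓝[≠] 0) (𝓝 1) := by
    have := hslope.comp hmap
    refine this.congr' ?_
    filter_upwards [self_mem_nhdsWithin] with s hs
    simp only [Function.comp_apply, slope_def_field, Real.log_one, sub_zero,
      add_sub_cancel_left]
  rw [← nhdsNE_sup_pure 0]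
  rw [tendsto_sup]
  constructor
  · refine hcomp.congr' ?_
    filter_upwards [self_mem_nhdsWithin] with s hs
    simp [Set.mem_compl_iff, Set.mem_singleton_iff] at hs
    simp [hs]
  · simpa using tendsto_pure_nhds (fun s : ℝ => if s = 0 then 1 else Real.log (1 + s) / s) 0

/-- Key lemma: from `(f - c)/A → L` with `A → 0`, deduce `log(f/c)/A → L/c` and `f → c`. -/
lemma log_ratio_tendsto (f A : ℝ → ℝ) (c L : ℝ) (hc : 0 < c)
    (hA0 : Tendsto A atTop (𝓝 0)) (hAne : ∀ᶠ t in atTop, A t ≠ 0)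
    (h : Tendsto (fun t => (f t - c) / A t) atTop (𝓝 L)) :
    Tendsto (fun t => Real.log (f t / c) / A t) atTop (𝓝 (L / c)) ∧
      Tendsto f atTop (𝓝 c) := by
  have hf : Tendsto f atTop (𝓝 c) := by
    have h1 : Tendsto (fun t => (f t - c) / A t * A t + c) atTop (𝓝 (L * 0 + c)) :=
      (h.mul hA0).add tendsto_const_nhds
    rw [show L * 0 + c = c by ring] at h1
    refine h1.congr' ?_
    filter_upwards [hAne] with t ht
    field_simp
    ring
  refine ⟨?_, hf⟩
  set H : ℝ → ℝ := fun s => if s = 0 then 1 else Real.log (1 + s) / s with hH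
  have hg : Tendsto (fun t => f t / c - 1) atTop (𝓝 0) := by
    have := (hf.div_const c).sub_const 1
    simpa [div_self hc.ne'] using this
  have hgh : Tendsto (fun t => H (f t / c - 1)) atTop (𝓝 1) := aux_h_tendsto.comp hg
  have hga : Tendsto (fun t => (f t / c - 1) / A t) atTop (𝓝 (L / c)) := by
    refine (h.div_const c).congr (fun t => ?_)
    rw [div_sub_one hc.ne', div_div, div_div, mul_comm]
  have := hga.mul hgh
  rw [show L / c * 1 = L / c by ring] at this
  refine this.congr (fun t => ?_)
  by_cases hs : f t / c - 1 = 0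
  · simp [H, hs, show f t / c = 1 by linarith]
  · have h1 : f t / c = 1 + (f t / c - 1) := by ring
    simp only [H, if_neg hs]
    rw [div_mul_div_comm, mul_comm (A t), mul_div_mul_left _ _ hs, ← h1]

/-- Lemma 4.2, limit form, case γ+ρ = 0, i.e. ρ = −γ. -/
theorem secondOrder_logRatio_limit_zeroCase (U a A : ℝ → ℝ) (γ ρ : ℝ)
    (hγ : 0 < γ) (hρ : ρ = -γ)
    (ha : ∀ t, 0 < a t)
    (hA0 : Tendsto A atTop (𝓝 0))
    (hAne : ∀ᶠ t in atTop, A t ≠ 0)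
    (hArv : ∀ x > (0:ℝ), Tendsto (fun t => |A (t * x)| / |A t|) atTop (𝓝 (x ^ ρ)))
    (h2 : ∀ x > (0:ℝ),
      Tendsto (fun t => ((U (t * x) - U t) / a t - (x ^ γ - 1) / γ) / A t)
        atTop (𝓝 (Real.log x))) :
    ∀ x > (1:ℝ), ∀ y > (1:ℝ),
      Tendsto
        (fun t => (Real.log ((U (t * x) - U t) / (U (t * y) - U t))
            - Real.log ((x ^ γ - 1) / (y ^ γ - 1))) / A t)
        atTop
        (𝓝 (γ * Real.log x / (x ^ γ - 1) - γ * Real.log y / (y ^ γ - 1))) := by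
  intro x hx y hy
  have hx0 : (0:ℝ) < x := lt_trans one_pos hx
  have hy0 : (0:ℝ) < y := lt_trans one_pos hy
  have hxγ : 0 < x ^ γ - 1 := by
    have : (1:ℝ) < x ^ γ := Real.one_lt_rpow_iff_of_pos hx0 |>.mpr (Or.inl ⟨hx, hγ⟩)
    linarith
  have hyγ : 0 < y ^ γ - 1 := by
    have : (1:ℝ) < y ^ γ := Real.one_lt_rpow_iff_of_pos hy0 |>.mpr (Or.inl ⟨hy, hγ⟩)
    linarith
  set Dx : ℝ := (x ^ γ - 1) / γ with hDxdef
  set Dy : ℝ := (y ^ γ - 1) / γ with hDydef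
  have hDx : 0 < Dx := div_pos hxγ hγ
  have hDy : 0 < Dy := div_pos hyγ hγ
  obtain ⟨Hx, hfx⟩ := log_ratio_tendsto (fun t => (U (t * x) - U t) / a t) A Dx
    (Real.log x) hDx hA0 hAne (h2 x hx0)
  obtain ⟨Hy, hfy⟩ := log_ratio_tendsto (fun t => (U (t * y) - U t) / a t) A Dy
    (Real.log y) hDy hA0 hAne (h2 y hy0)
  have hLx : Real.log x / Dx = γ * Real.log x / (x ^ γ - 1) := by
    rw [hDxdef]; field_simp
  have hLy : Real.log y / Dy = γ * Real.log y / (y ^ γ - 1) := by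
    rw [hDydef]; field_simp
  rw [hLx] at Hx; rw [hLy] at Hy
  have hfxpos : ∀ᶠ t in atTop, 0 < (U (t * x) - U t) / a t :=
    hfx.eventually (eventually_gt_nhds hDx)
  have hfypos : ∀ᶠ t in atTop, 0 < (U (t * y) - U t) / a t :=
    hfy.eventually (eventually_gt_nhds hDy)
  refine (Hx.sub Hy).congr' ?_
  filter_upwards [hfxpos, hfypos] with t htx hty
  have hat := (ha t).ne'
  have hpx : 0 < U (t * x) - U t := by
    have := mul_pos htx (ha t)
    rwa [div_mul_cancel₀ _ hat] at this
  have hpy : 0 < U (t * y) - U t := by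
    have := mul_pos hty (ha t)
    rwa [div_mul_cancel₀ _ hat] at this
  rw [← sub_div]
  congr 1
  have hratio : (U (t * x) - U t) / (U (t * y) - U t)
      = ((U (t * x) - U t) / a t) / ((U (t * y) - U t) / a t) := by
    field_simp
  have hD : (x ^ γ - 1) / (y ^ γ - 1) = Dx / Dy := by
    rw [hDxdef, hDydef]; field_simp
  rw [hratio, hD,
    Real.log_div htx.ne' hty.ne', Real.log_div hDx.ne' hDy.ne',
    Real.log_div htx.ne' hDx.ne', Real.log_div hty.ne' hDy.ne']
  ring
end

section
/- Let Y be a standard Pareto random variable, i.e. with distribution function F_Y(y) = 1 − 1/y for y ≥ 1, and let α ≥ 1. Then Var[ (ln Y)^{2α}/(2Γ(2α+1)) − (ln Y)^{α−1}/Γ(α) ] = V_α, where V_α = (1/4){ Γ(4α)/(α Γ(2α)²) + 4Γ(2α−1)/Γ(α)² − 2Γ(3α)/(α Γ(α) Γ(2α)) − 1 }. -/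
open MeasureTheory Real
open Set

lemma log_image_Ioi_one : Real.log '' Set.Ioi (1:ℝ) = Set.Ioi 0 := by
  ext x
  constructor
  · rintro ⟨y, hy, rfl⟩
    exact Real.log_pos hy
  · intro hx
    exact ⟨Real.exp x, by simpa using Real.one_lt_exp_iff.mpr hx, Real.log_exp x⟩

lemma deriv_log_Ioi : ∀ y ∈ Set.Ioi (1:ℝ), HasDerivWithinAt Real.log (y⁻¹) (Set.Ioi 1) y :=
  fun y hy => (Real.hasDerivAt_log (by linarith [mem_Ioi.mp hy])).hasDerivWithinAt

lemma injOn_log_Ioi : Set.InjOn Real.log (Set.Ioi (1:ℝ)) :=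
  Real.log_injOn_pos.mono (fun y hy => by simp at *; linarith)

lemma pointwise_eq (p : ℝ) : ∀ y ∈ Set.Ioi (1:ℝ),
    |y⁻¹| • (Real.exp (-Real.log y) * (Real.log y) ^ p) = (Real.log y) ^ p * y ^ (-2:ℝ) := by
  intro y hy
  have hy1 : (1:ℝ) < y := hy
  have hy0 : (0:ℝ) < y := by linarith
  rw [Real.exp_neg, Real.exp_log hy0, abs_of_pos (by positivity), smul_eq_mul]
  rw [show (-2:ℝ) = (-1) + (-1) by norm_num, Real.rpow_add hy0,
    Real.rpow_neg_one]
  ring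

lemma pareto_integrable (p : ℝ) (hp : -1 < p) :
    IntegrableOn (fun y => (Real.log y) ^ p * y ^ (-2:ℝ)) (Set.Ioi (1:ℝ)) := by
  have h := (MeasureTheory.integrableOn_image_iff_integrableOn_abs_deriv_smul
      measurableSet_Ioi deriv_log_Ioi injOn_log_Ioi
      (fun x => Real.exp (-x) * x ^ p)).mp ?_
  · exact (h.congr_fun (pointwise_eq p) measurableSet_Ioi)
  · rw [log_image_Ioi_one]
    have := integrableOn_rpow_mul_exp_neg_rpow hp zero_lt_one
    refine this.congr_fun (fun x hx => ?_) measurableSet_Ioi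
    beta_reduce; rw [Real.rpow_one]; ring

lemma pareto_integral (p : ℝ) (hp : -1 < p) :
    ∫ y in Set.Ioi (1:ℝ), (Real.log y) ^ p * y ^ (-2:ℝ) = Real.Gamma (p + 1) := by
  rw [Real.Gamma_eq_integral (by linarith), ← log_image_Ioi_one,
    MeasureTheory.integral_image_eq_integral_abs_deriv_smul measurableSet_Ioi
      deriv_log_Ioi injOn_log_Ioi (fun x => Real.exp (-x) * x ^ (p+1-1))]
  rw [show p + 1 - 1 = p by ring]
  exact (setIntegral_congr_fun measurableSet_Ioi (fun y hy => (pointwise_eq p y hy).symm))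

/-- For a standard Pareto random variable `Y` (density `y⁻²` on `[1,∞)`)
and `α ≥ 1`, the variance of `(ln Y)^{2α}/(2Γ(2α+1)) − (ln Y)^{α−1}/Γ(α)` equals
`V_α = (1/4){Γ(4α)/(αΓ(2α)²) + 4Γ(2α−1)/Γ(α)² − 2Γ(3α)/(αΓ(α)Γ(2α)) − 1}`. -/
theorem pareto_variance_Valpha (α : ℝ) (hα : 1 ≤ α) :
    (∫ y in Set.Ioi (1:ℝ),
        ((Real.log y) ^ (2 * α) / (2 * Real.Gamma (2 * α + 1))
          - (Real.log y) ^ (α - 1) / Real.Gamma α) ^ 2 * y ^ (-2 : ℝ))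
      - (∫ y in Set.Ioi (1:ℝ),
          ((Real.log y) ^ (2 * α) / (2 * Real.Gamma (2 * α + 1))
            - (Real.log y) ^ (α - 1) / Real.Gamma α) * y ^ (-2 : ℝ)) ^ 2
      = (1 / 4) * (Real.Gamma (4 * α) / (α * (Real.Gamma (2 * α)) ^ 2)
          + 4 * Real.Gamma (2 * α - 1) / (Real.Gamma α) ^ 2
          - 2 * Real.Gamma (3 * α) / (α * Real.Gamma α * Real.Gamma (2 * α)) - 1) := by
  have hα0 : (0:ℝ) < α := by linarith
  have hΓα : (0:ℝ) < Real.Gamma α := Real.Gamma_pos_of_pos hα0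
  have hΓ2α : (0:ℝ) < Real.Gamma (2*α) := Real.Gamma_pos_of_pos (by linarith)
  have hΓ2α1 : (0:ℝ) < Real.Gamma (2*α+1) := Real.Gamma_pos_of_pos (by linarith)
  set c1 : ℝ := 2 * Real.Gamma (2*α+1) with hc1
  set c2 : ℝ := Real.Gamma α with hc2
  have i4 := pareto_integrable (4*α) (by linarith)
  have i3 := pareto_integrable (3*α-1) (by linarith)
  have i2 := pareto_integrable (2*α-2) (by linarith)
  have iA := pareto_integrable (2*α) (by linarith)
  have iB := pareto_integrable (α-1) (by linarith)
  have e1 : ∀ y ∈ Set.Ioi (1:ℝ),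
      ((Real.log y) ^ (2*α) / c1 - (Real.log y) ^ (α-1) / c2) ^ 2 * y ^ (-2:ℝ)
      = (1/c1)^2 * ((Real.log y)^(4*α) * y^(-2:ℝ))
        - (2*(1/c1)*(1/c2)) * ((Real.log y)^(3*α-1) * y^(-2:ℝ))
        + (1/c2)^2 * ((Real.log y)^(2*α-2) * y^(-2:ℝ)) := by
    intro y hy
    have hL : (0:ℝ) < Real.log y := Real.log_pos hy
    have h44 : (Real.log y)^(2*α) * (Real.log y)^(2*α) = (Real.log y)^(4*α) := by
      rw [← Real.rpow_add hL, show 2*α+2*α = 4*α by ring]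
    have h34 : (Real.log y)^(2*α) * (Real.log y)^(α-1) = (Real.log y)^(3*α-1) := by
      rw [← Real.rpow_add hL, show 2*α+(α-1) = 3*α-1 by ring]
    have h22 : (Real.log y)^(α-1) * (Real.log y)^(α-1) = (Real.log y)^(2*α-2) := by
      rw [← Real.rpow_add hL, show (α-1)+(α-1) = 2*α-2 by ring]
    rw [← h44, ← h34, ← h22]; ring
  have e2 : ∀ y ∈ Set.Ioi (1:ℝ),
      ((Real.log y) ^ (2*α) / c1 - (Real.log y) ^ (α-1) / c2) * y ^ (-2:ℝ)
      = (1/c1) * ((Real.log y)^(2*α) * y^(-2:ℝ))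
        - (1/c2) * ((Real.log y)^(α-1) * y^(-2:ℝ)) := by
    intro y _; ring
  have hs1 : Integrable (fun x => (1/c1)^2 * ((Real.log x)^(4*α) * x^(-2:ℝ))
      - (2*(1/c1)*(1/c2)) * ((Real.log x)^(3*α-1) * x^(-2:ℝ)))
      (volume.restrict (Set.Ioi 1)) := (i4.const_mul _).sub (i3.const_mul _)
  have hs2 : Integrable (fun x => (1/c2)^2 * ((Real.log x)^(2*α-2) * x^(-2:ℝ)))
      (volume.restrict (Set.Ioi 1)) := i2.const_mul _
  have hs3 : Integrable (fun x => (1/c1) * ((Real.log x)^(2*α) * x^(-2:ℝ)))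
      (volume.restrict (Set.Ioi 1)) := iA.const_mul _
  have hs4 : Integrable (fun x => (1/c2) * ((Real.log x)^(α-1) * x^(-2:ℝ)))
      (volume.restrict (Set.Ioi 1)) := iB.const_mul _
  rw [setIntegral_congr_fun measurableSet_Ioi e1,
      setIntegral_congr_fun measurableSet_Ioi e2,
      MeasureTheory.integral_add hs1 hs2,
      MeasureTheory.integral_sub (i4.const_mul _) (i3.const_mul _),
      MeasureTheory.integral_sub hs3 hs4,
      MeasureTheory.integral_const_mul, MeasureTheory.integral_const_mul,
      MeasureTheory.integral_const_mul, MeasureTheory.integral_const_mul,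
      MeasureTheory.integral_const_mul,
      pareto_integral _ (by linarith : (-1:ℝ) < 4*α),
      pareto_integral _ (by linarith : (-1:ℝ) < 3*α-1),
      pareto_integral _ (by linarith : (-1:ℝ) < 2*α-2),
      pareto_integral _ (by linarith : (-1:ℝ) < 2*α),
      pareto_integral _ (by linarith : (-1:ℝ) < α-1)]
  rw [show 3*α-1+1 = 3*α by ring, show 2*α-2+1 = 2*α-1 by ring, show α-1+1 = α by ring]
  rw [Real.Gamma_add_one (by positivity : (4*α) ≠ 0),
      Real.Gamma_add_one (by positivity : (2*α) ≠ 0)] at *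
  have hne1 : Real.Gamma α ≠ 0 := ne_of_gt hΓα
  have hne2 : Real.Gamma (2*α) ≠ 0 := ne_of_gt hΓ2α
  have hne3 : α ≠ 0 := ne_of_gt hα0
  rw [hc1, hc2]
  field_simp
  ring
end

section
/- The function α₀(γ) = ln(1 + γ + √((1+γ)² − 1)) / ln(1+γ) is strictly decreasing on (0, ∞); moreover α₀(γ) → ∞ as γ → 0⁺ and α₀(γ) → 1 as γ → ∞. -/
open Real Filter Topology

/-- Core inequality: `log ∘ cosh` has strictly increasing slopes from the origin. -/
private lemma core_ineq {s t : ℝ} (hs : 0 < s) (hst : s < t) :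
    t * Real.log (Real.cosh s) < s * Real.log (Real.cosh t) := by
  have ht : 0 < t := hs.trans hst
  set lam : ℝ := s / t with hlam
  have hlam0 : 0 < lam := div_pos hs ht
  have hlam1 : lam < 1 := (div_lt_one ht).2 hst
  have hconc := Real.strictConcaveOn_rpow hlam0 hlam1
  have hne : Real.exp t ≠ Real.exp (-t) := by
    intro h
    have := Real.exp_injective h
    linarith
  have key := hconc.2 (Set.mem_Ici.2 (Real.exp_pos t).le)
    (Set.mem_Ici.2 (Real.exp_pos (-t)).le) hne (by norm_num : (0:ℝ) < 1/2)
    (by norm_num : (0:ℝ) < 1/2) (by norm_num)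
  simp only [smul_eq_mul] at key
  have h1 : Real.exp t ^ lam = Real.exp s := by
    rw [← Real.exp_mul]
    congr 1
    rw [hlam]; field_simp
  have h2 : Real.exp (-t) ^ lam = Real.exp (-s) := by
    rw [← Real.exp_mul]
    congr 1
    rw [hlam]; field_simp
  rw [h1, h2] at key
  have hcosh_s : Real.cosh s = 1/2 * Real.exp s + 1/2 * Real.exp (-s) := by
    rw [Real.cosh_eq]; ring
  have hcosh_t : 1/2 * Real.exp t + 1/2 * Real.exp (-t) = Real.cosh t := by
    rw [Real.cosh_eq]; ring
  rw [hcosh_t] at key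
  rw [← hcosh_s] at key
  -- key : cosh s < cosh t ^ lam
  have hlog : Real.log (Real.cosh s) < lam * Real.log (Real.cosh t) := by
    calc Real.log (Real.cosh s) < Real.log (Real.cosh t ^ lam) :=
          Real.log_lt_log (Real.cosh_pos s) key
      _ = lam * Real.log (Real.cosh t) := Real.log_rpow (Real.cosh_pos t) _
  have := mul_lt_mul_of_pos_left hlog ht
  calc t * Real.log (Real.cosh s) < t * (lam * Real.log (Real.cosh t)) := this
    _ = s * Real.log (Real.cosh t) := by
        rw [hlam]; field_simp

/-- For `x > 1`, `cosh (log (x + √(x²-1))) = x`. -/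
private lemma cosh_log_eq {x : ℝ} (hx : 1 < x) :
    Real.cosh (Real.log (x + Real.sqrt (x ^ 2 - 1))) = x := by
  set s : ℝ := Real.sqrt (x ^ 2 - 1) with hsdef
  have hs0 : 0 ≤ s := Real.sqrt_nonneg _
  have hs2 : s ^ 2 = x ^ 2 - 1 := Real.sq_sqrt (by nlinarith)
  have hu : 0 < x + s := by linarith
  have hinv : (x + s)⁻¹ = x - s := by
    apply inv_eq_of_mul_eq_one_right
    nlinarith
  rw [Real.cosh_eq, Real.exp_log hu, ← Real.log_inv, Real.exp_log (by rw [hinv] at *; nlinarith [Real.sqrt_nonneg (x^2-1)] : (0:ℝ) < (x+s)⁻¹)]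
  rw [hinv]
  ring

/-- For `x > 1`, `log (x + √(x²-1)) > 0`. -/
private lemma log_arg_pos {x : ℝ} (hx : 1 < x) :
    0 < Real.log (x + Real.sqrt (x ^ 2 - 1)) :=
  Real.log_pos (by nlinarith [Real.sqrt_nonneg (x ^ 2 - 1)])

/-- The function
`α₀(γ) = ln(1 + γ + √((1+γ)² − 1))/ln(1+γ)` is strictly decreasing on `(0,∞)`,
tends to `∞` as `γ → 0⁺` and tends to `1` as `γ → ∞`. -/
theorem alphaZero_strictAnti_and_limits :
    StrictAntiOn
        (fun γ : ℝ => Real.log (1 + γ + Real.sqrt ((1 + γ) ^ 2 - 1)) / Real.log (1 + γ))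
        (Set.Ioi 0) ∧
      Tendsto (fun γ : ℝ => Real.log (1 + γ + Real.sqrt ((1 + γ) ^ 2 - 1)) / Real.log (1 + γ))
        (𝓝[>] 0) atTop ∧
      Tendsto (fun γ : ℝ => Real.log (1 + γ + Real.sqrt ((1 + γ) ^ 2 - 1)) / Real.log (1 + γ))
        atTop (𝓝 1) := by
  refine ⟨?_, ?_, ?_⟩
  · -- strict antitonicity
    intro γ₁ h1 γ₂ h2 h12
    simp only [Set.mem_Ioi] at h1 h2
    have hx1 : (1:ℝ) < 1 + γ₁ := by linarith
    have hx2 : (1:ℝ) < 1 + γ₂ := by linarith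
    set L₁ := Real.log (1 + γ₁ + Real.sqrt ((1 + γ₁) ^ 2 - 1)) with hL1
    set L₂ := Real.log (1 + γ₂ + Real.sqrt ((1 + γ₂) ^ 2 - 1)) with hL2
    have hL1pos : 0 < L₁ := log_arg_pos hx1
    have hL2pos : 0 < L₂ := log_arg_pos hx2
    have hL12 : L₁ < L₂ := by
      apply Real.log_lt_log (by nlinarith [Real.sqrt_nonneg ((1+γ₁)^2 - 1)])
      have hsq : Real.sqrt ((1 + γ₁) ^ 2 - 1) < Real.sqrt ((1 + γ₂) ^ 2 - 1) :=
        Real.sqrt_lt_sqrt (by nlinarith) (by nlinarith)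
      linarith
    have hcore := core_ineq hL1pos hL12
    rw [cosh_log_eq hx1, cosh_log_eq hx2] at hcore
    have hlog1 : 0 < Real.log (1 + γ₁) := Real.log_pos hx1
    have hlog2 : 0 < Real.log (1 + γ₂) := Real.log_pos hx2
    rw [div_lt_div_iff₀ hlog2 hlog1]
    linarith [hcore]
  · -- limit at 0⁺
    apply tendsto_atTop_mono' (𝓝[>] (0:ℝ)) (f₁ := fun γ => (Real.sqrt (2 * γ))⁻¹)
    · filter_upwards [Ioo_mem_nhdsGT
        (by norm_num : (0:ℝ) < (1/2))] with γ hγ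
      obtain ⟨hγ0, hγh⟩ := hγ
      set u := Real.sqrt (2 * γ) with hudef
      have hu0 : 0 < u := Real.sqrt_pos.2 (by linarith)
      have hu2 : u ^ 2 = 2 * γ := Real.sq_sqrt (by linarith)
      have hu1 : u ≤ 1 := by
        nlinarith
      -- numerator lower bound
      have hnum : u / 2 ≤ Real.log (1 + γ + Real.sqrt ((1 + γ) ^ 2 - 1)) := by
        have hle : u ≤ Real.sqrt ((1 + γ) ^ 2 - 1) := by
          rw [hudef]
          exact Real.sqrt_le_sqrt (by nlinarith)
        have h1u : (0:ℝ) < 1 + u := by linarith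
        have hlog_ge : 1 - (1 + u)⁻¹ ≤ Real.log (1 + u) :=
          Real.one_sub_inv_le_log_of_pos h1u
        have hinv : (1 + u)⁻¹ ≤ 1 - u / 2 := by
          rw [inv_le_iff_one_le_mul₀ h1u] at *
          nlinarith
        have h2 : Real.log (1 + u) ≤ Real.log (1 + γ + Real.sqrt ((1 + γ) ^ 2 - 1)) :=
          Real.log_le_log h1u (by linarith)
        linarith
      -- denominator upper bound
      have hden_pos : 0 < Real.log (1 + γ) := Real.log_pos (by linarith)
      have hden : Real.log (1 + γ) ≤ γ := by
        have := Real.log_le_sub_one_of_pos (show (0:ℝ) < 1 + γ by linarith)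
        linarith
      have hdiv : (u / 2) / γ ≤
          Real.log (1 + γ + Real.sqrt ((1 + γ) ^ 2 - 1)) / Real.log (1 + γ) :=
        div_le_div₀ (le_trans (by positivity) hnum) hnum hden_pos hden
      have heq : u⁻¹ = (u / 2) / γ := by
        rw [div_div]
        rw [show (2 : ℝ) * γ = u ^ 2 from hu2.symm]
        rw [pow_two, ← div_div, div_self hu0.ne', one_div]
      rw [heq]
      exact hdiv
    · apply tendsto_inv_nhdsGT_zero.comp
      rw [tendsto_nhdsWithin_iff]
      constructor
      · have : Tendsto (fun γ : ℝ => Real.sqrt (2 * γ)) (𝓝 0) (𝓝 (Real.sqrt (2 * 0))) :=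
          (Real.continuous_sqrt.comp (continuous_const.mul continuous_id)).tendsto 0
        simp only [mul_zero, Real.sqrt_zero] at this
        exact this.mono_left nhdsWithin_le_nhds
      · filter_upwards [self_mem_nhdsWithin] with γ hγ
        exact Real.sqrt_pos.2 (by linarith [Set.mem_Ioi.1 hγ])
  · -- limit at ∞
    have hlogtop : Tendsto (fun γ : ℝ => Real.log (1 + γ)) atTop atTop :=
      Real.tendsto_log_atTop.comp (tendsto_atTop_add_const_left _ 1 tendsto_id)
    apply tendsto_of_tendsto_of_tendsto_of_le_of_le'
      (g := fun _ : ℝ => (1:ℝ)) (h := fun γ : ℝ => 1 + Real.log 2 / Real.log (1 + γ))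
    · exact tendsto_const_nhds
    · have : Tendsto (fun γ : ℝ => 1 + Real.log 2 / Real.log (1 + γ)) atTop (𝓝 (1 + 0)) :=
        tendsto_const_nhds.add (Tendsto.div_atTop tendsto_const_nhds hlogtop)
      simpa using this
    · filter_upwards [eventually_gt_atTop (0:ℝ)] with γ hγ
      have hx : (1:ℝ) < 1 + γ := by linarith
      have hlogpos : 0 < Real.log (1 + γ) := Real.log_pos hx
      rw [le_div_iff₀ hlogpos, one_mul]
      exact Real.log_le_log (by linarith)
        (le_add_of_nonneg_right (Real.sqrt_nonneg _))
    · filter_upwards [eventually_gt_atTop (0:ℝ)] with γ hγ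
      have hx : (1:ℝ) < 1 + γ := by linarith
      have hlogpos : 0 < Real.log (1 + γ) := Real.log_pos hx
      have hs : Real.sqrt ((1 + γ) ^ 2 - 1) ≤ 1 + γ := by
        calc Real.sqrt ((1 + γ) ^ 2 - 1) ≤ Real.sqrt ((1 + γ) ^ 2) :=
              Real.sqrt_le_sqrt (by linarith)
          _ = 1 + γ := Real.sqrt_sq (by linarith)
      have hupper : Real.log (1 + γ + Real.sqrt ((1 + γ) ^ 2 - 1)) ≤
          Real.log 2 + Real.log (1 + γ) := by
        rw [← Real.log_mul (by norm_num) (by linarith : (1:ℝ) + γ ≠ 0)]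
        exact Real.log_le_log (by linarith [Real.sqrt_nonneg ((1+γ)^2 - 1)])
          (by linarith)
      rw [div_le_iff₀ hlogpos]
      have : (1 + Real.log 2 / Real.log (1 + γ)) * Real.log (1 + γ) =
          Real.log 2 + Real.log (1 + γ) := by
        field_simp
        ring
      rw [this]
      exact hupper
end
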